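/- For every feasible fractional solution x, all items i < i' with c(i) = c(i'), and every time j with i' − 1 ≤ j ≤ k+n, it holds that w_i^j ≤ w_{i'}^j; in particular, among the items of one color present in the buffer, every later item has weight at least that of the earliest item of that color. -/

import Mathlib

open Finset

open scoped Classical in
/-- The next item of the same color as item `i`, or `k+n+2` if `i` is the last of its color. -/
noncomputable def nxt (k n : ℕ) (c : ℕ → ℕ) (i : ℕ) : ℕ :=
  if h : ∃ i', (i < i' ∧ i' ≤ n) ∧ c i' = c i then Nat.find h else k + n + 2

/-- Feasibility of a fractional solution of the RBM linear program. -/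
def Feasible (k n : ℕ) (c : ℕ → ℕ) (x : ℕ → ℕ → ℝ) : Prop :=
  (∀ i j, ¬(1 ≤ i ∧ i ≤ n ∧ max i (k+1) ≤ j ∧ j ≤ k + n) → x i j = 0) ∧
  (∀ i, 1 ≤ i → i ≤ n → ∑ j ∈ Finset.Icc (max i (k+1)) (k+n), x i j = 1) ∧
  (∀ j, k+1 ≤ j → j ≤ k+n → ∑ i ∈ Finset.Icc 1 (min j n), x i j = 1) ∧
  (∀ i, 1 ≤ i → i ≤ n → nxt k n c i ≤ n →
    ∀ j, nxt k n c i ≤ j → x (nxt k n c i) j - x i (j-1) ≥ 0) ∧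
  (∀ i j, 0 ≤ x i j)

/-- The cost `z(x)` of a fractional solution. -/
noncomputable def cost (k n : ℕ) (c : ℕ → ℕ) (x : ℕ → ℕ → ℝ) : ℝ :=
  ∑ i ∈ Finset.Icc 1 n, ∑ j ∈ Finset.Icc (max i (k+1)) (nxt k n c i - 2), x i j

/-- The weight `w_i^j` of item `i` at time `j`. -/
def weight (k : ℕ) (x : ℕ → ℕ → ℝ) (i j : ℕ) : ℝ :=
  1 - ∑ j' ∈ Finset.Icc (max i (k+1)) j, x i j'

lemma sum_ext_aux (k n : ℕ) (c : ℕ → ℕ) (x : ℕ → ℕ → ℝ) (hx : Feasible k n c x)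
    (i : ℕ) (b : ℕ) :
    ∑ j' ∈ Finset.Icc (max i (k+1)) b, x i j' = ∑ j' ∈ Finset.Icc 0 b, x i j' := by
  apply Finset.sum_subset
  · intro a ha
    simp only [Finset.mem_Icc] at *
    omega
  · intro a ha hna
    apply hx.1
    simp only [Finset.mem_Icc] at ha hna
    omega

lemma tail_eq_aux (k n : ℕ) (c : ℕ → ℕ) (x : ℕ → ℕ → ℝ) (hx : Feasible k n c x)
    (i : ℕ) (hi1 : 1 ≤ i) (hi2 : i ≤ n) (j : ℕ) (hj : j ≤ k + n) :
    weight k x i j = ∑ j' ∈ Finset.Icc (j+1) (k+n), x i j' := by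
  have h1 := sum_ext_aux k n c x hx i j
  have h2 := sum_ext_aux k n c x hx i (k+n)
  have hfull : ∑ j' ∈ Finset.Icc (max i (k+1)) (k+n), x i j' = 1 := hx.2.1 i hi1 hi2
  have hsplit : ∑ j' ∈ Finset.Icc 0 j, x i j' + ∑ j' ∈ Finset.Ioc j (k+n), x i j'
      = ∑ j' ∈ Finset.Icc 0 (k+n), x i j' := by
    rw [← Finset.sum_union]
    · congr 1
      ext a
      simp only [Finset.mem_union, Finset.mem_Icc, Finset.mem_Ioc]
      omega
    · rw [Finset.disjoint_left]
      intro a ha hb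
      simp only [Finset.mem_Icc, Finset.mem_Ioc] at ha hb
      omega
  rw [weight, h1, Finset.Icc_add_one_left_eq_Ioc]
  linarith

lemma step_aux (k n : ℕ) (c : ℕ → ℕ) (x : ℕ → ℕ → ℝ) (hx : Feasible k n c x)
    (i : ℕ) (hi1 : 1 ≤ i) (hi2 : i ≤ n) (m : ℕ) (him : i < m) (hm : m ≤ n)
    (hmnxt : nxt k n c i = m) (j : ℕ) (hj1 : m ≤ j + 1) (hj2 : j ≤ k + n) :
    weight k x i j ≤ weight k x m j := by
  have hm1 : 1 ≤ m := by omega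
  have hcon := hx.2.2.2.1 i hi1 hi2 (by rw [hmnxt]; exact hm)
  rw [hmnxt] at hcon
  have hz1 : x m (k+n+1) = 0 := hx.1 m (k+n+1) (by omega)
  have hz : x i (k+n) = 0 := by
    have h := hcon (k+n+1) (by omega)
    simp only [Nat.add_sub_cancel] at h
    have hnn := hx.2.2.2.2 i (k+n)
    linarith
  rw [tail_eq_aux k n c x hx i hi1 hi2 j hj2, tail_eq_aux k n c x hx m hm1 hm j hj2]
  have key : ∑ j' ∈ Finset.Icc (j+1) (k+n), (x i (j'-1) - x i j')
      ≤ ∑ j' ∈ Finset.Icc (j+1) (k+n), (x m j' - x i j') := by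
    apply Finset.sum_le_sum
    intro j' hj'
    simp only [Finset.mem_Icc] at hj'
    have := hcon j' (by omega)
    linarith
  have tele : ∑ j' ∈ Finset.Icc (j+1) (k+n), (x i (j'-1) - x i j')
      = x i j - x i (k+n) := by
    rw [← Finset.Ico_add_one_right_eq_Icc, Finset.sum_Ico_eq_sum_range]
    have hcg : ∀ t ∈ Finset.range (k+n+1-(j+1)),
        x i (j+1+t-1) - x i (j+1+t)
          = (fun s => x i (j+s)) t - (fun s => x i (j+s)) (t+1) := by
      intro t _
      simp only
      congr 2 <;> omega
    rw [Finset.sum_congr rfl hcg, Finset.sum_range_sub' (fun s => x i (j+s))]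
    have e2 : j + (k+n+1-(j+1)) = k+n := by omega
    rw [e2, Nat.add_zero]
  have hsub : ∑ j' ∈ Finset.Icc (j+1) (k+n), (x m j' - x i j')
      = ∑ j' ∈ Finset.Icc (j+1) (k+n), x m j' - ∑ j' ∈ Finset.Icc (j+1) (k+n), x i j' :=
    Finset.sum_sub_distrib _ _
  have hnn := hx.2.2.2.2 i j
  linarith [key, tele, hsub]

/-- For every feasible fractional solution `x`, all items `i < i'` of the same color,
and every time `j` with `i' - 1 ≤ j ≤ k + n`, it holds that `w_i^j ≤ w_{i'}^j`;
in particular, among the items of one color in the buffer, every later item has weight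
at least that of the earliest item of that color. -/
theorem stmt3 (k n : ℕ) (hk : 1 ≤ k) (hn : 1 ≤ n) (c : ℕ → ℕ) (x : ℕ → ℕ → ℝ)
    (hx : Feasible k n c x) (i i' : ℕ) (hi1 : 1 ≤ i) (hii' : i < i') (hi'2 : i' ≤ n)
    (hcol : c i = c i')
    (j : ℕ) (hj1 : i' - 1 ≤ j) (hj2 : j ≤ k + n) :
    weight k x i j ≤ weight k x i' j := by
  classical
  clear hk hn
  have main : ∀ d i i', i' - i = d → 1 ≤ i → i < i' → i' ≤ n → c i = c i' →
      ∀ j, i' - 1 ≤ j → j ≤ k + n → weight k x i j ≤ weight k x i' j := by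
    intro d
    induction d using Nat.strong_induction_on with
    | _ d ih =>
      intro i i' hd hi1 hii' hi'2 hcol j hj1 hj2
      have hex : ∃ i'', (i < i'' ∧ i'' ≤ n) ∧ c i'' = c i :=
        ⟨i', ⟨hii', hi'2⟩, hcol.symm⟩
      have hnx : nxt k n c i = Nat.find hex := by rw [nxt, dif_pos hex]
      have hspec := Nat.find_spec hex
      have hle : Nat.find hex ≤ i' := Nat.find_le ⟨⟨hii', hi'2⟩, hcol.symm⟩
      have h1 : weight k x i j ≤ weight k x (Nat.find hex) j :=
        step_aux k n c x hx i hi1 (by omega) (Nat.find hex) hspec.1.1 hspec.1.2 hnx j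
          (by omega) hj2
      rcases eq_or_lt_of_le hle with heq | hlt
      · rwa [heq] at h1
      · have h2 : weight k x (Nat.find hex) j ≤ weight k x i' j := by
          apply ih (i' - Nat.find hex) (by omega) (Nat.find hex) i' rfl (by omega) hlt hi'2
            (by rw [hspec.2, hcol]) j hj1 hj2
        exact h1.trans h2
  exact main (i' - i) i i' rfl hi1 hii' hi'2 hcol j hj1 hj2
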